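/- Let f : 2^X → ℝ≥0 be a monotone submodular function with f(∅) = 0 and curvature c, and define l(A) = ∑_{a∈A}(f(X) − f(X \ {a})) and f'(A) = f(A) − l(A). Then l is modular, f' is monotone, submodular, normalized (f'(∅)=0), nonnegative, and f'(A) ≤ c·f(A) for every A ⊆ X. -/

import Mathlib

open Finset

theorem stmt_16 {X : Type*} [Fintype X] [DecidableEq X] [Nonempty X]
    (f : Finset X → ℝ)
    (hmono : ∀ A B : Finset X, A ⊆ B → f A ≤ f B)
    (hsub : ∀ A B : Finset X, f (A ∪ B) + f (A ∩ B) ≤ f A + f B)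
    (hnorm : f ∅ = 0) (hnn : ∀ A, 0 ≤ f A)
    (hpos : ∀ x : X, 0 < f {x})
    (c : ℝ)
    (hc : c = 1 - Finset.univ.inf' Finset.univ_nonempty
      (fun x => (f Finset.univ - f (Finset.univ.erase x)) / f {x}))
    (l f' : Finset X → ℝ)
    (hl : ∀ A : Finset X, l A = ∑ a ∈ A, (f Finset.univ - f (Finset.univ.erase a)))
    (hf' : ∀ A : Finset X, f' A = f A - l A) :
    (∀ A B : Finset X, l A + l B = l (A ∪ B) + l (A ∩ B)) ∧
    (∀ A B : Finset X, A ⊆ B → f' A ≤ f' B) ∧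
    (∀ A B : Finset X, f' (A ∪ B) + f' (A ∩ B) ≤ f' A + f' B) ∧
    f' ∅ = 0 ∧
    (∀ A : Finset X, 0 ≤ f' A) ∧
    (∀ A : Finset X, f' A ≤ c * f A) := by
  -- single-step gain bound
  have step : ∀ (a : X) (C : Finset X), a ∉ C →
      f C + (f Finset.univ - f (Finset.univ.erase a)) ≤ f (insert a C) := by
    intro a C haC
    have h := hsub (insert a C) (Finset.univ.erase a)
    have hu : insert a C ∪ Finset.univ.erase a = Finset.univ := by
      ext x; by_cases hx : x = a <;> simp [hx]
    have hi : insert a C ∩ Finset.univ.erase a = C := by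
      ext x
      constructor
      · intro hx
        simp only [mem_inter, mem_insert, mem_erase] at hx
        rcases hx.1 with h1 | h1
        · exact absurd h1 hx.2.1
        · exact h1
      · intro hx
        have hxa : x ≠ a := fun h => haC (h ▸ hx)
        simp [hx, hxa]
    rw [hu, hi] at h
    linarith [hmono (Finset.univ.erase a) Finset.univ (Finset.erase_subset _ _)]
  -- key lemma: sum of univ-marginals bounds gain
  have key : ∀ (S A : Finset X), Disjoint A S →
      f A + ∑ a ∈ S, (f Finset.univ - f (Finset.univ.erase a)) ≤ f (A ∪ S) := by
    intro S
    induction S using Finset.induction_on with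
    | empty => intro A _; simp
    | insert a S haS ih =>
      intro A hdisj
      have hdisj' : Disjoint A S := hdisj.mono_right (Finset.subset_insert _ _)
      have haAS : a ∉ A ∪ S := by
        simp only [mem_union]
        rintro (h | h)
        · exact (Finset.disjoint_left.mp hdisj) h (Finset.mem_insert_self a S)
        · exact haS h
      have h1 := ih A hdisj'
      have h2 := step a (A ∪ S) haAS
      have : A ∪ insert a S = insert a (A ∪ S) := by
        ext x; simp [or_comm, or_assoc, or_left_comm]
      rw [Finset.sum_insert haS, this]
      linarith
  have gain : ∀ A B : Finset X, A ⊆ B →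
      f A + ∑ a ∈ B \ A, (f Finset.univ - f (Finset.univ.erase a)) ≤ f B := by
    intro A B hAB
    have h := key (B \ A) A Finset.disjoint_sdiff
    rwa [Finset.union_sdiff_of_subset hAB] at h
  -- modularity of l
  have lmod : ∀ A B : Finset X, l A + l B = l (A ∪ B) + l (A ∩ B) := by
    intro A B
    rw [hl, hl, hl, hl]
    exact (Finset.sum_union_inter).symm
  -- monotonicity of f'
  have f'mono : ∀ A B : Finset X, A ⊆ B → f' A ≤ f' B := by
    intro A B hAB
    rw [hf', hf', hl, hl]
    have h := gain A B hAB
    have hsplit : ∑ a ∈ B, (f Finset.univ - f (Finset.univ.erase a))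
        = ∑ a ∈ A, (f Finset.univ - f (Finset.univ.erase a))
          + ∑ a ∈ B \ A, (f Finset.univ - f (Finset.univ.erase a)) := by
      rw [← Finset.sum_sdiff hAB]; ring
    linarith
  have f'norm : f' ∅ = 0 := by rw [hf', hl]; simp [hnorm]
  refine ⟨lmod, f'mono, ?_, f'norm, ?_, ?_⟩
  · intro A B
    rw [hf', hf', hf', hf']
    have := hsub A B
    have := lmod A B
    linarith
  · intro A
    have := f'mono ∅ A (Finset.empty_subset A)
    linarith [f'norm]
  · -- curvature bound
    intro A
    set m := Finset.univ.inf' Finset.univ_nonempty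
      (fun x => (f Finset.univ - f (Finset.univ.erase x)) / f {x}) with hm
    have hm_nonneg : 0 ≤ m := by
      rw [hm]
      apply Finset.le_inf'
      intro x _
      have h1 : f (Finset.univ.erase x) ≤ f Finset.univ :=
        hmono _ _ (Finset.erase_subset _ _)
      exact div_nonneg (by linarith) (hpos x).le
    have hterm : ∀ x : X, m * f {x} ≤ f Finset.univ - f (Finset.univ.erase x) := by
      intro x
      have h1 : m ≤ (f Finset.univ - f (Finset.univ.erase x)) / f {x} :=
        Finset.inf'_le _ (Finset.mem_univ x)
      have := (le_div_iff₀ (hpos x)).mp h1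
      linarith
    have hsubadd : ∀ A : Finset X, f A ≤ ∑ a ∈ A, f {a} := by
      intro A
      induction A using Finset.induction_on with
      | empty => simp [hnorm]
      | insert a S haS ih =>
        have h := hsub {a} S
        have hu : {a} ∪ S = insert a S := by ext x; simp
        have hi : ({a} : Finset X) ∩ S = ∅ := by
          ext x; simp only [mem_inter, mem_singleton, notMem_empty, iff_false]
          rintro ⟨rfl, h2⟩; exact haS h2
        rw [hu, hi, hnorm] at h
        rw [Finset.sum_insert haS]
        linarith
    have hlA : m * f A ≤ l A := by
      calc m * f A ≤ m * ∑ a ∈ A, f {a} :=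
            mul_le_mul_of_nonneg_left (hsubadd A) hm_nonneg
        _ = ∑ a ∈ A, m * f {a} := Finset.mul_sum _ _ _
        _ ≤ ∑ a ∈ A, (f Finset.univ - f (Finset.univ.erase a)) :=
            Finset.sum_le_sum (fun a _ => hterm a)
        _ = l A := (hl A).symm
    rw [hf', hc]
    nlinarith [hnn A]
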